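/- arXiv:2502.09852 — 3 statements merged into one kernel-verified Lean document; each statement's English description precedes it below -/
import Mathlib

section
/- Let r ≥ 1, let w_1,…,w_r be positive reals, and let a > 0. Then the series ζ_r(s,a,w) = Σ_{m_1,…,m_r ≥ 0} (a + m_1 w_1 + ⋯ + m_r w_r)^{-s} converges absolutely for every complex s with Re(s) > r. -/
open Real Finset

lemma pi_prod_summable {r : ℕ} {g : ℕ → ℝ} (hg0 : ∀ n, 0 ≤ g n) (hg : Summable g) :
    Summable (fun m : Fin r → ℕ => ∏ i, g (m i)) := by
  induction r with
  | zero => exact Summable.of_finite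
  | succ n ih =>
      have h := (hg.mul_of_nonneg ih (fun n => hg0 n)
        (fun m => Finset.prod_nonneg fun i _ => hg0 _))
      have := h.comp_injective (Fin.consEquiv (fun _ : Fin (n+1) => ℕ)).symm.injective
      refine this.congr fun m => ?_
      simp [Fin.consEquiv, Fin.prod_univ_succ, Fin.tail, Function.comp]

/-- The Barnes multiple zeta series converges absolutely for `Re s > r`. -/
theorem stmt0 (r : ℕ) (hr : 1 ≤ r) (w : Fin r → ℝ) (hw : ∀ i, 0 < w i)
    (a : ℝ) (ha : 0 < a) (s : ℂ) (hs : (r : ℝ) < s.re) :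
    Summable (fun m : Fin r → ℕ =>
      ‖((a + ∑ i, (m i : ℝ) * w i : ℝ) : ℂ) ^ (-s)‖) := by
  set σ := s.re with hσ
  have hr0 : (0:ℝ) < r := by exact_mod_cast hr
  set p := σ / r with hp
  have hp1 : 1 < p := (one_lt_div hr0).2 hs
  have hp0 : 0 < p := lt_trans one_pos hp1
  -- the one-dimensional comparison series
  set g : ℕ → ℝ := fun n => ((n : ℝ) + 1) ^ (-p) with hgdef
  have hg0 : ∀ n, 0 ≤ g n := fun n => Real.rpow_nonneg (by positivity) _
  have hg : Summable g := by
    have h1 : Summable (fun n : ℕ => (n : ℝ) ^ (-p)) :=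
      Real.summable_nat_rpow.2 (by linarith)
    have := (summable_nat_add_iff 1).2 h1
    refine this.congr fun n => ?_
    push_cast
    rfl
  -- the constant
  set c : Fin r → ℝ := fun i => min a (w i) with hcdef
  have hc0 : ∀ i, 0 < c i := fun i => lt_min ha (hw i)
  set C : ℝ := ∏ i, c i with hCdef
  have hC0 : 0 < C := Finset.prod_pos fun i _ => hc0 i
  have key : Summable (fun m : Fin r → ℕ => C ^ (-p) * ∏ i, g (m i)) :=
    (pi_prod_summable hg0 hg).mul_left _
  refine Summable.of_nonneg_of_le (fun m => norm_nonneg _) (fun m => ?_) key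
  -- pointwise bound
  set x : ℝ := a + ∑ i, (m i : ℝ) * w i with hxdef
  have hx0 : 0 < x := by
    have : (0:ℝ) ≤ ∑ i, (m i : ℝ) * w i :=
      Finset.sum_nonneg fun i _ => mul_nonneg (Nat.cast_nonneg _) (hw i).le
    positivity
  have hnorm : ‖((x : ℝ) : ℂ) ^ (-s)‖ = x ^ (-σ) := by
    rw [Complex.norm_cpow_eq_rpow_re_of_pos hx0]
    simp [hσ]
  rw [hnorm]
  -- x ^ r ≥ C * ∏ (m i + 1)
  have hxr : C * ∏ i, ((m i : ℝ) + 1) ≤ x ^ (r : ℕ) := by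
    have h1 : ∀ i, c i * ((m i : ℝ) + 1) ≤ x := by
      intro i
      have h2 : c i * ((m i : ℝ) + 1) ≤ a + (m i : ℝ) * w i := by
        have := min_le_left a (w i); have := min_le_right a (w i)
        have hmi : (0:ℝ) ≤ (m i : ℝ) := Nat.cast_nonneg _
        nlinarith [hc0 i]
      have h3 : a + (m i : ℝ) * w i ≤ x := by
        rw [hxdef]
        have : (m i : ℝ) * w i ≤ ∑ j, (m j : ℝ) * w j :=
          Finset.single_le_sum (f := fun j => (m j : ℝ) * w j)
            (fun j _ => mul_nonneg (Nat.cast_nonneg _) (hw j).le) (Finset.mem_univ i)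
        linarith
      linarith
    calc C * ∏ i, ((m i : ℝ) + 1) = ∏ i, c i * ((m i : ℝ) + 1) := by
          rw [hCdef, ← Finset.prod_mul_distrib]
      _ ≤ ∏ i : Fin r, x := Finset.prod_le_prod
          (fun i _ => mul_nonneg (hc0 i).le (by positivity)) (fun i _ => h1 i)
      _ = x ^ (r : ℕ) := by rw [Finset.prod_const, Finset.card_univ, Fintype.card_fin]
  have hy0 : 0 < C * ∏ i, ((m i : ℝ) + 1) :=
    mul_pos hC0 (Finset.prod_pos fun i _ => by positivity)
  have hstep : x ^ (-σ) ≤ (C * ∏ i, ((m i : ℝ) + 1)) ^ (-p) := by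
    have h5 : (x ^ (r:ℕ)) ^ (-p) ≤ (C * ∏ i, ((m i : ℝ) + 1)) ^ (-p) :=
      Real.rpow_le_rpow_of_nonpos hy0 hxr (by linarith)
    have h6 : (x ^ (r:ℕ)) ^ (-p) = x ^ (-σ) := by
      rw [← Real.rpow_natCast x r, ← Real.rpow_mul hx0.le]
      congr 1
      field_simp [hp]
      rw [hp]; field_simp
    linarith
  refine hstep.trans_eq ?_
  rw [Real.mul_rpow hC0.le (Finset.prod_nonneg fun i _ => by positivity)]
  congr 1
  rw [← Real.finset_prod_rpow _ _ (fun i _ => by positivity)]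
end

section
/- Let r ≥ 1, let s be a complex number, let a, w_1, …, w_r > 0, and let 1 ≤ x ≤ N. Then Σ over choices ((p_1,q_1),…,(p_r,q_r)) with each (p_i,q_i) ∈ {(0,x),(x,N)} and not all equal to (0,x), of Σ over b_i ∈ {p_i,q_i} of (−1)^{#{i : b_i = q_i}} (a + b_1 w_1 + ⋯ + b_r w_r)^{r−s}, equals Σ over nonempty subsets E ⊆ {1,…,r} of (−1)^{#E} [ (a + N Σ_{i∈E} w_i)^{r−s} − (a + x Σ_{i∈E} w_i)^{r−s} ]. -/
open Finset

namespace Stmt7Aux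

variable {r : ℕ}

lemma sign_prod (δ : Fin r → Bool) :
    (-1 : ℂ) ^ (Finset.univ.filter (fun i => δ i = true)).card
      = ∏ i, (if δ i then (-1 : ℂ) else 1) := by
  rw [Finset.prod_ite, Finset.prod_const, Finset.prod_const, one_pow, mul_one]

lemma bool_not_ne_not : ∀ (a b : Bool), ((!a) ≠ (!b)) ↔ (a ≠ b) := by decide

/-- set of coordinates where the two corner-indicators differ -/
def Dset (p : (Fin r → Bool) × (Fin r → Bool)) : Finset (Fin r) :=
  Finset.univ.filter (fun i => p.1 i ≠ p.2 i)

lemma Dset_nonempty {p : (Fin r → Bool) × (Fin r → Bool)} (hne : p.1 ≠ p.2) :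
    (Dset p).Nonempty := by
  rw [Finset.nonempty_iff_ne_empty]
  intro hc
  apply hne
  funext i
  by_contra hi
  have : i ∈ Dset p := by simp [Dset, hi]
  simp [hc] at this

def flp (p : (Fin r → Bool) × (Fin r → Bool)) : (Fin r → Bool) × (Fin r → Bool) :=
  if h : (Dset p).Nonempty then
    (Function.update p.1 ((Dset p).min' h) (!p.1 ((Dset p).min' h)),
     Function.update p.2 ((Dset p).min' h) (!p.2 ((Dset p).min' h)))
  else p

lemma Dset_flp (p : (Fin r → Bool) × (Fin r → Bool)) (h : (Dset p).Nonempty) :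
    Dset (flp p) = Dset p := by
  rw [flp, dif_pos h]
  set i₀ := (Dset p).min' h with hi₀
  ext i
  simp only [Dset, mem_filter, mem_univ, true_and]
  rcases eq_or_ne i i₀ with rfl | hne
  · simp only [Function.update_self]
    exact bool_not_ne_not _ _
  · rw [Function.update_of_ne hne, Function.update_of_ne hne]

lemma flp_flp (p : (Fin r → Bool) × (Fin r → Bool)) (h : (Dset p).Nonempty) :
    flp (flp p) = p := by
  conv_lhs => rw [flp]
  rw [dif_pos (by rw [Dset_flp p h]; exact h)]
  have hmin : ((Dset (flp p)).min' (by rw [Dset_flp p h]; exact h)) = (Dset p).min' h := by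
    congr 1
    exact Dset_flp p h
  rw [hmin]
  rw [flp, dif_pos h]
  ext1 <;>
  · simp [Function.update_idem, Function.update_self, Bool.not_not, Function.update_eq_self]

lemma flp_ne (p : (Fin r → Bool) × (Fin r → Bool)) (h : (Dset p).Nonempty) :
    flp p ≠ p := by
  rw [flp, dif_pos h]
  intro hEq
  have h1 := congrArg (fun q : (Fin r → Bool) × (Fin r → Bool) => q.1 ((Dset p).min' h)) hEq
  simp only [Function.update_self] at h1
  cases hb : p.1 ((Dset p).min' h) <;> rw [hb] at h1 <;> simp at h1

def corner (w : Fin r → ℝ) (x N : ℝ) (p : (Fin r → Bool) × (Fin r → Bool)) : ℝ :=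
  ∑ i, (if p.2 i then (if p.1 i then N else x) else (if p.1 i then x else 0)) * w i

lemma corner_flp (w : Fin r → ℝ) (x N : ℝ) (p : (Fin r → Bool) × (Fin r → Bool))
    (h : (Dset p).Nonempty) : corner w x N (flp p) = corner w x N p := by
  rw [flp, dif_pos h]
  set i₀ := (Dset p).min' h with hi₀def
  have hi₀ : p.1 i₀ ≠ p.2 i₀ := by
    have hm := (Dset p).min'_mem h
    rw [← hi₀def] at hm
    simpa [Dset] using hm
  unfold corner
  dsimp only
  refine Finset.sum_congr rfl fun i _ => ?_
  rcases eq_or_ne i i₀ with rfl | hne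
  · simp only [Function.update_self]
    cases h1 : p.1 i₀ <;> cases h2 : p.2 i₀ <;> simp_all
  · simp only [Function.update_of_ne hne]

lemma sign_flp (p : (Fin r → Bool) × (Fin r → Bool)) (h : (Dset p).Nonempty) :
    (∏ i, (if (flp p).2 i then (-1 : ℂ) else 1)) = - ∏ i, (if p.2 i then (-1 : ℂ) else 1) := by
  rw [flp, dif_pos h]
  set i₀ := (Dset p).min' h with hi₀def
  rw [← Finset.mul_prod_erase Finset.univ
      (fun i => if Function.update p.2 i₀ (!p.2 i₀) i then (-1 : ℂ) else 1) (mem_univ i₀),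
    ← Finset.mul_prod_erase Finset.univ
      (fun i => if p.2 i then (-1 : ℂ) else 1) (mem_univ i₀)]
  have h2 : ∏ i ∈ Finset.univ.erase i₀,
      (if Function.update p.2 i₀ (!p.2 i₀) i then (-1 : ℂ) else 1)
      = ∏ i ∈ Finset.univ.erase i₀, (if p.2 i then (-1 : ℂ) else 1) :=
    Finset.prod_congr rfl fun i hi => by rw [Function.update_of_ne (Finset.mem_erase.1 hi).1]
  simp only [Function.update_self] at *
  rw [h2]
  cases p.2 i₀ <;> simp

lemma key (f : ℝ → ℂ) (w : Fin r → ℝ) (x N : ℝ) :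
    ∑ p : (Fin r → Bool) × (Fin r → Bool),
      (∏ i, (if p.2 i then (-1 : ℂ) else 1)) * f (corner w x N p)
    = ∑ σ : Fin r → Bool,
        (∏ i, (if σ i then (-1 : ℂ) else 1)) * f (∑ i, (if σ i then N else 0) * w i) := by
  classical
  rw [← Finset.sum_filter_add_sum_filter_not Finset.univ
    (fun p : (Fin r → Bool) × (Fin r → Bool) => p.1 = p.2)]
  have hB : (∑ p ∈ Finset.univ.filter
      (fun p : (Fin r → Bool) × (Fin r → Bool) => ¬ p.1 = p.2),
      (∏ i, (if p.2 i then (-1 : ℂ) else 1)) * f (corner w x N p)) = 0 := by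
    refine Finset.sum_involution (fun p _ => flp p) ?_ ?_ ?_ ?_
    · intro p hp
      have hne : p.1 ≠ p.2 := (Finset.mem_filter.1 hp).2
      have h := Dset_nonempty hne
      rw [corner_flp w x N p h, sign_flp p h]
      ring
    · intro p hp _
      exact flp_ne p (Dset_nonempty (Finset.mem_filter.1 hp).2)
    · intro p hp
      have hne : p.1 ≠ p.2 := (Finset.mem_filter.1 hp).2
      have h := Dset_nonempty hne
      simp only [Finset.mem_filter, Finset.mem_univ, true_and]
      have h' : (Dset (flp p)).Nonempty := by rw [Dset_flp p h]; exact h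
      obtain ⟨i, hi⟩ := h'
      simp only [Dset, Finset.mem_filter] at hi
      intro hEq
      exact hi.2 (congrFun hEq i)
    · intro p hp
      exact flp_flp p (Dset_nonempty (Finset.mem_filter.1 hp).2)
  rw [hB, add_zero]
  refine Finset.sum_nbij' (fun p => p.1) (fun σ => (σ, σ)) ?_ ?_ ?_ ?_ ?_
  · intro p _; exact Finset.mem_univ _
  · intro σ _; simp
  · intro p hp
    obtain ⟨p1, p2⟩ := p
    have h2 : p1 = p2 := (Finset.mem_filter.1 hp).2
    cases h2; rfl
  · intro σ _; rfl
  · intro p hp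
    have h2 : p.1 = p.2 := (Finset.mem_filter.1 hp).2
    unfold corner
    rw [← h2]
    congr 1
    refine congrArg f (Finset.sum_congr rfl fun i _ => ?_)
    cases h1 : p.1 i <;> simp [h1]

end Stmt7Aux

/-- Corner telescoping identity (Lemma B): the signed corner sum over all
sub-boxes of `[0,N]^r` split at `x` (except `[0,x]^r`) collapses to an
inclusion–exclusion over nonempty subsets of coordinates. -/
theorem stmt7 (r : ℕ) (hr : 1 ≤ r) (s : ℂ) (a : ℝ) (ha : 0 < a)
    (w : Fin r → ℝ) (hw : ∀ i, 0 < w i) (x N : ℝ) (hx : 1 ≤ x) (hxN : x ≤ N) :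
    ∑ ε ∈ (Finset.univ : Finset (Fin r → Bool)).erase (fun _ => false),
      ∑ δ : Fin r → Bool,
        (-1 : ℂ) ^ (Finset.univ.filter (fun i => δ i = true)).card *
          ((a + ∑ i, (if δ i then (if ε i then N else x) else (if ε i then x else 0)) * w i
            : ℝ) : ℂ) ^ ((r : ℂ) - s)
    = ∑ E ∈ (Finset.univ : Finset (Fin r)).powerset.filter (· ≠ ∅),
        (-1 : ℂ) ^ E.card *
          (((a + N * ∑ i ∈ E, w i : ℝ) : ℂ) ^ ((r : ℂ) - s)
            - ((a + x * ∑ i ∈ E, w i : ℝ) : ℂ) ^ ((r : ℂ) - s)) := by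
  classical
  set f : ℝ → ℂ := fun t => ((a + t : ℝ) : ℂ) ^ ((r : ℂ) - s) with hf
  have split : ∀ (G : (Fin r → Bool) → ℂ),
      (∑ ε ∈ (Finset.univ : Finset (Fin r → Bool)).erase (fun _ => false), G ε)
        = (∑ ε, G ε) - G (fun _ => false) :=
    fun G => eq_sub_of_add_eq (Finset.sum_erase_add _ _ (Finset.mem_univ _))
  rw [split]
  have htot : (∑ ε : Fin r → Bool, ∑ δ : Fin r → Bool,
        (-1 : ℂ) ^ (Finset.univ.filter (fun i => δ i = true)).card *
          ((a + ∑ i, (if δ i then (if ε i then N else x) else (if ε i then x else 0)) * w i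
            : ℝ) : ℂ) ^ ((r : ℂ) - s))
      = ∑ σ : Fin r → Bool,
          (∏ i, (if σ i then (-1 : ℂ) else 1)) * f (∑ i, (if σ i then N else 0) * w i) := by
    rw [← Stmt7Aux.key f w x N, Fintype.sum_prod_type]
    exact Finset.sum_congr rfl fun ε _ => Finset.sum_congr rfl fun δ _ => by
      rw [Stmt7Aux.sign_prod]; rfl
  have h00 : (∑ δ : Fin r → Bool,
        (-1 : ℂ) ^ (Finset.univ.filter (fun i => δ i = true)).card *
          ((a + ∑ i, (if δ i then (if (fun _ : Fin r => false) i then N else x)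
              else (if (fun _ : Fin r => false) i then x else 0)) * w i : ℝ) : ℂ)
            ^ ((r : ℂ) - s))
      = ∑ σ : Fin r → Bool,
          (∏ i, (if σ i then (-1 : ℂ) else 1)) * f (∑ i, (if σ i then x else 0) * w i) := by
    refine Finset.sum_congr rfl fun δ _ => ?_
    rw [Stmt7Aux.sign_prod]
    have harg : (∑ i, (if δ i then (if (fun _ : Fin r => false) i then N else x)
        else (if (fun _ : Fin r => false) i then x else 0)) * w i)
        = ∑ i, (if δ i then x else 0) * w i :=
      Finset.sum_congr rfl fun i _ => by cases h1 : δ i <;> simp [h1]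
    rw [harg]
  rw [htot, h00]
  have hsum : ∀ (c : ℝ) (σ : Fin r → Bool),
      (∑ i, (if σ i then c else 0) * w i)
        = c * ∑ i ∈ Finset.univ.filter (fun i => σ i = true), w i := by
    intro c σ
    rw [Finset.mul_sum, Finset.sum_filter]
    exact Finset.sum_congr rfl fun i _ => by cases h1 : σ i <;> simp [h1]
  rw [← Finset.sum_sub_distrib]
  have hstep : ∀ σ : Fin r → Bool,
      (∏ i, (if σ i then (-1 : ℂ) else 1)) * f (∑ i, (if σ i then N else 0) * w i)
        - (∏ i, (if σ i then (-1 : ℂ) else 1)) * f (∑ i, (if σ i then x else 0) * w i)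
      = (-1 : ℂ) ^ (Finset.univ.filter (fun i => σ i = true)).card *
          (f (N * ∑ i ∈ Finset.univ.filter (fun i => σ i = true), w i)
            - f (x * ∑ i ∈ Finset.univ.filter (fun i => σ i = true), w i)) := by
    intro σ
    rw [← mul_sub, ← Stmt7Aux.sign_prod, hsum N σ, hsum x σ]
  rw [Finset.sum_congr rfl fun σ _ => hstep σ]
  have hbij : (∑ σ : Fin r → Bool,
        (-1 : ℂ) ^ (Finset.univ.filter (fun i => σ i = true)).card *
          (f (N * ∑ i ∈ Finset.univ.filter (fun i => σ i = true), w i)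
            - f (x * ∑ i ∈ Finset.univ.filter (fun i => σ i = true), w i)))
      = ∑ E ∈ (Finset.univ : Finset (Fin r)).powerset,
          (-1 : ℂ) ^ E.card * (f (N * ∑ i ∈ E, w i) - f (x * ∑ i ∈ E, w i)) := by
    refine Finset.sum_nbij' (fun σ => Finset.univ.filter (fun i => σ i = true))
      (fun E => fun i => decide (i ∈ E)) ?_ ?_ ?_ ?_ ?_
    · intro σ _; simp [Finset.mem_powerset]
    · intro E _; exact Finset.mem_univ _
    · intro σ _; funext i; simp
    · intro E _; ext i; simp
    · intro σ _; rfl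
  rw [hbij]
  rw [← Finset.sum_filter_of_ne (p := fun E => E ≠ ∅) ?_]
  · intro E _ hne hE
    apply hne
    subst hE
    simp
end

section
/- Let r ≥ 1, a > 0, w_1,…,w_r > 0, and r−1 ≤ σ ≤ r. Then as T → ∞, the sum over pairs of tuples m, n ∈ ℤ_{≥0}^r with all coordinates ≤ T and m·w = n·w of max_{1≤k≤r}{m_k, n_k}/((a+m·w)^σ (a+n·w)^σ) is O(T^{2r−2σ}) if σ < r and O(log T) if σ = r. -/
open Filter

section Stmt14Helpers

open Real Finset


lemma stmt14_tele_key (β : ℝ) (hβ : -1 < β) (x : ℝ) (hx : 1 ≤ x) :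
    x ^ β ≤ 2/(β+1) * ((x+1) ^ (β+1) - x ^ (β+1)) := by
  have hx0 : (0:ℝ) < x := lt_of_lt_of_le one_pos hx
  have hp : (0:ℝ) < β + 1 := by linarith
  have hc : (0:ℝ) ≤ 2/(β+1) := by positivity
  rcases le_or_gt 0 β with hb | hb
  · -- β ≥ 0, so β+1 ≥ 1; convex Bernoulli
    have h1 : (1 : ℝ) + (β+1) * (1/x) ≤ (1 + 1/x) ^ (β+1) :=
      one_add_mul_self_le_rpow_one_add
        (le_trans (by norm_num : (-1:ℝ) ≤ 0) (by positivity)) (by linarith)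
    have h2 : (x+1) ^ (β+1) = x ^ (β+1) * (1 + 1/x) ^ (β+1) := by
      rw [← Real.mul_rpow hx0.le (by positivity)]
      rw [mul_add, mul_one, mul_one_div, div_self hx0.ne']
    have h3 : x ^ (β+1) * ((β+1) * (1/x)) = (β+1) * x ^ β := by
      rw [mul_comm (β+1) (1/x), ← mul_assoc, mul_one_div,
        ← Real.rpow_sub_one hx0.ne', add_sub_cancel_right]
      ring
    have h4 : (β+1) * x ^ β ≤ (x+1) ^ (β+1) - x ^ (β+1) := by
      rw [h2]
      calc (β+1) * x ^ β = x ^ (β+1) * ((β+1) * (1/x)) := h3.symm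
        _ ≤ x ^ (β+1) * ((1 + 1/x)^(β+1) - 1) := by
            apply mul_le_mul_of_nonneg_left _ (by positivity)
            linarith
        _ = x ^ (β+1) * (1 + 1/x)^(β+1) - x ^ (β+1) := by ring
    have hxb : (0:ℝ) ≤ x ^ β := (Real.rpow_pos_of_pos hx0 β).le
    have he : 2/(β+1) * ((β+1) * x ^ β) = 2 * x ^ β := by
      field_simp
    calc x ^ β ≤ 2 * x ^ β := by linarith
      _ = 2/(β+1) * ((β+1) * x ^ β) := he.symm
      _ ≤ 2/(β+1) * ((x+1)^(β+1) - x^(β+1)) := mul_le_mul_of_nonneg_left h4 hc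
  · -- -1 < β < 0; concave Bernoulli
    have hp1 : β + 1 ≤ 1 := by linarith
    have hx1 : (0:ℝ) < x + 1 := by linarith
    have hfr : 1/(x+1) ≤ 1 := by rw [div_le_one hx1]; linarith
    have hfr0 : (0:ℝ) < 1/(x+1) := by positivity
    have h1 : ((1:ℝ) + (-(1/(x+1)))) ^ (β+1) ≤ 1 + (β+1) * (-(1/(x+1))) :=
      rpow_one_add_le_one_add_mul_self (by linarith) hp.le hp1
    have h2 : x ^ (β+1) = (x+1) ^ (β+1) * ((1:ℝ) + (-(1/(x+1)))) ^ (β+1) := by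
      rw [← Real.mul_rpow hx1.le (by linarith : (0:ℝ) ≤ 1 + (-(1/(x+1))))]
      congr 1
      field_simp
      ring
    have h3 : (x+1) ^ (β+1) * (1/(x+1)) = (x+1) ^ β := by
      rw [mul_one_div, ← Real.rpow_sub_one hx1.ne', add_sub_cancel_right]
    have h4 : (β+1) * (x+1) ^ β ≤ (x+1) ^ (β+1) - x ^ (β+1) := by
      have hP : (0:ℝ) ≤ (x+1)^(β+1) := (Real.rpow_pos_of_pos hx1 _).le
      have h5 := mul_le_mul_of_nonneg_left h1 hP
      rw [← h2] at h5
      calc (β+1) * (x+1)^β = (x+1)^(β+1) * ((β+1) * (1/(x+1))) := by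
            rw [mul_comm (β+1) (1/(x+1)), ← mul_assoc, h3, mul_comm]
        _ ≤ (x+1)^(β+1) - x ^ (β+1) := by nlinarith
    -- x^β ≤ 2 (x+1)^β
    have h5 : x ^ β ≤ 2 * (x+1) ^ β := by
      have hle : x + 1 ≤ 2 * x := by linarith
      have h6 : (2*x) ^ β ≤ (x+1) ^ β := Real.rpow_le_rpow_of_nonpos hx1 hle hb.le
      have h7 : (2*x) ^ β = 2 ^ β * x ^ β := Real.mul_rpow (by norm_num) hx0.le
      have h8 : (1:ℝ) ≤ 2 ^ (β+1) := Real.one_le_rpow (by norm_num) hp.le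
      have h9 : (2:ℝ) ^ (β+1) = 2 * 2 ^ β := by
        rw [Real.rpow_add (by norm_num), Real.rpow_one]; ring
      have hxb : (0:ℝ) ≤ x ^ β := (Real.rpow_pos_of_pos hx0 β).le
      nlinarith
    have he : 2/(β+1) * ((β+1) * (x+1) ^ β) = 2 * (x+1) ^ β := by field_simp
    calc x ^ β ≤ 2 * (x+1) ^ β := h5
      _ = 2/(β+1) * ((β+1) * (x+1)^β) := he.symm
      _ ≤ 2/(β+1) * ((x+1)^(β+1) - x^(β+1)) := mul_le_mul_of_nonneg_left h4 hc

lemma stmt14_tele_rpow (β : ℝ) (hβ : -1 < β) (n : ℕ) :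
    ∑ s ∈ Finset.range n, ((s:ℝ)+1) ^ β ≤ 2/(β+1) * ((n:ℝ)+1) ^ (β+1) := by
  have hp : (0:ℝ) < β + 1 := by linarith
  have hc : (0:ℝ) ≤ 2/(β+1) := by positivity
  have key : ∀ s : ℕ, ((s:ℝ)+1) ^ β ≤
      2/(β+1) * ((((s+1:ℕ):ℝ)+1) ^ (β+1) - (((s:ℕ):ℝ)+1) ^ (β+1)) := by
    intro s
    have := stmt14_tele_key β hβ ((s:ℝ)+1) (by linarith [Nat.cast_nonneg (α:=ℝ) s])
    have hcast : (((s+1:ℕ):ℝ)+1) = ((s:ℝ)+1) + 1 := by push_cast; ring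
    rw [hcast]
    exact this
  calc ∑ s ∈ Finset.range n, ((s:ℝ)+1) ^ β
      ≤ ∑ s ∈ Finset.range n,
          2/(β+1) * ((((s+1:ℕ):ℝ)+1) ^ (β+1) - (((s:ℕ):ℝ)+1) ^ (β+1)) :=
        Finset.sum_le_sum fun s _ => key s
    _ = 2/(β+1) * ∑ s ∈ Finset.range n,
          ((((s+1:ℕ):ℝ)+1) ^ (β+1) - (((s:ℕ):ℝ)+1) ^ (β+1)) := by
        rw [Finset.mul_sum]
    _ = 2/(β+1) * ((((n:ℕ):ℝ)+1) ^ (β+1) - (((0:ℕ):ℝ)+1) ^ (β+1)) :=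
        congrArg (fun z => 2/(β+1) * z)
          (Finset.sum_range_sub (fun m : ℕ => (((m:ℕ):ℝ)+1) ^ (β+1)) n)
    _ ≤ 2/(β+1) * ((n:ℝ)+1) ^ (β+1) := by
        apply mul_le_mul_of_nonneg_left _ hc
        have : (((0:ℕ):ℝ)+1) ^ (β+1) = 1 := by norm_num
        rw [this]
        have : (0:ℝ) ≤ ((n:ℝ)+1)^(β+1) := (Real.rpow_pos_of_pos (by positivity) _).le
        linarith

lemma stmt14_tele_log (n : ℕ) :
    ∑ s ∈ Finset.range n, ((s:ℝ)+1)⁻¹ ≤ 2 * Real.log ((n:ℝ)+1) := by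
  have key : ∀ s : ℕ, ((s:ℝ)+1)⁻¹ ≤
      2 * (Real.log (((s+1:ℕ):ℝ)+1) - Real.log (((s:ℕ):ℝ)+1)) := by
    intro s
    have hs1 : (0:ℝ) < (s:ℝ)+1 := by positivity
    have hs2 : (0:ℝ) < (s:ℝ)+2 := by positivity
    have hlog : Real.log (((s:ℝ)+1)/((s:ℝ)+2)) ≤ ((s:ℝ)+1)/((s:ℝ)+2) - 1 :=
      Real.log_le_sub_one_of_pos (by positivity)
    have hdiv : Real.log (((s:ℝ)+1)/((s:ℝ)+2)) = Real.log ((s:ℝ)+1) - Real.log ((s:ℝ)+2) :=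
      Real.log_div hs1.ne' hs2.ne'
    have h1 : ((s:ℝ)+2)⁻¹ ≤ Real.log ((s:ℝ)+2) - Real.log ((s:ℝ)+1) := by
      rw [hdiv] at hlog
      have : ((s:ℝ)+1)/((s:ℝ)+2) - 1 = -(((s:ℝ)+2)⁻¹) := by
        field_simp
        norm_num
      linarith [hlog.trans_eq this]
    have h2 : ((s:ℝ)+1)⁻¹ ≤ 2 * ((s:ℝ)+2)⁻¹ := by
      rw [inv_le_iff_one_le_mul₀ hs1]
      have : 2 * ((s:ℝ)+2)⁻¹ * ((s:ℝ)+1) = (2*((s:ℝ)+1))/((s:ℝ)+2) := by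
        field_simp
      rw [this, le_div_iff₀ hs2]
      linarith
    have hcast : (((s+1:ℕ):ℝ)+1) = (s:ℝ)+2 := by push_cast; ring
    rw [hcast]
    linarith
  calc ∑ s ∈ Finset.range n, ((s:ℝ)+1)⁻¹
      ≤ ∑ s ∈ Finset.range n,
          2 * (Real.log (((s+1:ℕ):ℝ)+1) - Real.log (((s:ℕ):ℝ)+1)) :=
        Finset.sum_le_sum fun s _ => key s
    _ = 2 * ∑ s ∈ Finset.range n,
          (Real.log (((s+1:ℕ):ℝ)+1) - Real.log (((s:ℕ):ℝ)+1)) := by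
        rw [← Finset.mul_sum]
    _ = 2 * (Real.log (((n:ℕ):ℝ)+1) - Real.log (((0:ℕ):ℝ)+1)) :=
        congrArg (fun z => 2 * z)
          (Finset.sum_range_sub (fun m : ℕ => Real.log (((m:ℕ):ℝ)+1)) n)
    _ ≤ 2 * Real.log ((n:ℝ)+1) := by norm_num


lemma stmt14_count_aux {r : ℕ} (hr : 1 ≤ r) (F : Finset (Fin r → ℕ)) (K : ℕ)
    (hK : ∀ n ∈ F, ∀ i, n i ≤ K)
    (hinj : ∀ n ∈ F, ∀ n' ∈ F, (∀ i, i ≠ (⟨0, hr⟩ : Fin r) → n i = n' i) → n = n') :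
    F.card ≤ (K+1)^(r-1) := by
  set i0 : Fin r := ⟨0, hr⟩ with hi0
  set t : Finset (Fin r → ℕ) :=
    Fintype.piFinset (fun i => if i = i0 then ({0} : Finset ℕ) else Finset.Iic K) with ht
  have hmaps : ∀ n ∈ F, (fun (i : Fin r) => if i = i0 then 0 else n i) ∈ t := by
    intro n hn
    rw [ht, Fintype.mem_piFinset]
    intro i
    by_cases h : i = i0
    · simp [h]
    · simp [h, hK n hn i]
  have hinjOn : Set.InjOn (fun (n : Fin r → ℕ) (i : Fin r) => if i = i0 then 0 else n i) F := by
    intro n hn n' hn' h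
    apply hinj n hn n' hn'
    intro i hi
    have := congrFun h i
    simpa [if_neg hi] using this
  refine le_trans (Finset.card_le_card_of_injOn _ hmaps hinjOn) ?_
  rw [ht, Fintype.card_piFinset]
  have : ∀ i : Fin r, (if i = i0 then ({0} : Finset ℕ) else Finset.Iic K).card
      = if i = i0 then 1 else K + 1 := by
    intro i; split <;> simp
  rw [Finset.prod_congr rfl (fun i _ => this i)]
  rw [← Finset.mul_prod_erase Finset.univ _ (Finset.mem_univ i0), if_pos rfl, one_mul]
  rw [Finset.prod_congr rfl (fun i hi => if_neg (Finset.ne_of_mem_erase hi)),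
    Finset.prod_const, Finset.card_erase_of_mem (Finset.mem_univ i0), Finset.card_univ,
    Fintype.card_fin]

lemma stmt14_main_bound {r : ℕ} (hr : 1 ≤ r) (a : ℝ) (ha : 0 < a) (w : Fin r → ℝ)
    (hw : ∀ i, 0 < w i) (σ : ℝ) (hσ0 : 0 ≤ σ) :
    ∃ C : ℝ, 0 < C ∧ ∀ N : ℕ,
      (∑ p ∈ ((Fintype.piFinset (fun _ : Fin r => Finset.Iic N)) ×ˢ
            (Fintype.piFinset (fun _ : Fin r => Finset.Iic N))).filter
          (fun p => ∑ i, (p.1 i : ℝ) * w i = ∑ i, (p.2 i : ℝ) * w i),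
        ((Finset.univ.sup (fun k => max (p.1 k) (p.2 k)) : ℕ) : ℝ) /
          ((a + ∑ i, (p.1 i : ℝ) * w i) ^ σ * (a + ∑ i, (p.2 i : ℝ) * w i) ^ σ))
      ≤ C * ∑ s ∈ Finset.range (r*N+1), (1+(s:ℝ)) ^ (2*(r:ℝ)-2*σ-1) := by
  haveI : Nonempty (Fin r) := ⟨⟨0, hr⟩⟩
  have hne : (Finset.univ : Finset (Fin r)).Nonempty := Finset.univ_nonempty
  set W : ℝ := Finset.univ.inf' hne w with hWdef
  have hW : 0 < W := by
    rw [hWdef, Finset.lt_inf'_iff]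
    exact fun i _ => hw i
  have hWle : ∀ i, W ≤ w i := fun i => Finset.inf'_le _ (Finset.mem_univ i)
  set V : ℝ := Finset.univ.sup' hne w with hVdef
  have hVle : ∀ i, w i ≤ V := fun i => Finset.le_sup' _ (Finset.mem_univ i)
  have hV : 0 < V := lt_of_lt_of_le (hw ⟨0, hr⟩) (hVle ⟨0, hr⟩)
  set c : ℝ := min a W with hcdef
  have hc : 0 < c := lt_min ha hW
  set B : ℝ := 1 + V/W with hBdef
  have hB0 : 0 < B := by positivity
  have hB1 : 1 ≤ B := by
    have : 0 ≤ V/W := by positivity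
    rw [hBdef]; linarith
  have hVW : 0 ≤ V/W := by positivity
  have hcp : 0 < c ^ (2*σ) := Real.rpow_pos_of_pos hc _
  refine ⟨(B / c^(2*σ)) * B^(r-1), by positivity, fun N => ?_⟩
  have hk0 : ∀ m : Fin r → ℕ, (0:ℝ) ≤ ∑ i, (m i : ℝ) :=
    fun m => Finset.sum_nonneg fun i _ => Nat.cast_nonneg _
  have h1k : ∀ m : Fin r → ℕ, (0:ℝ) < 1 + ∑ i, (m i : ℝ) := fun m => by linarith [hk0 m]
  have hdot0 : ∀ m : Fin r → ℕ, (0:ℝ) ≤ ∑ i, (m i : ℝ) * w i :=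
    fun m => Finset.sum_nonneg fun i _ => mul_nonneg (Nat.cast_nonneg _) (hw i).le
  have hdotW : ∀ m : Fin r → ℕ, W * ∑ i, (m i : ℝ) ≤ ∑ i, (m i : ℝ) * w i := by
    intro m
    rw [Finset.mul_sum]
    exact Finset.sum_le_sum fun i _ => by
      rw [mul_comm]
      exact mul_le_mul_of_nonneg_left (hWle i) (Nat.cast_nonneg _)
  have hdotV : ∀ m : Fin r → ℕ, (∑ i, (m i : ℝ) * w i) ≤ V * ∑ i, (m i : ℝ) := by
    intro m
    rw [Finset.mul_sum]
    exact Finset.sum_le_sum fun i _ =>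
      (mul_le_mul_of_nonneg_left (hVle i) (Nat.cast_nonneg _)).trans_eq (mul_comm _ _)
  set box := Fintype.piFinset (fun _ : Fin r => Finset.Iic N) with hbox
  -- Step 1 : termwise bound
  have step1 : ∀ p ∈ (box ×ˢ box).filter
      (fun p : (Fin r → ℕ) × (Fin r → ℕ) => ∑ i, (p.1 i : ℝ) * w i = ∑ i, (p.2 i : ℝ) * w i),
      ((Finset.univ.sup (fun k => max (p.1 k) (p.2 k)) : ℕ) : ℝ) /
          ((a + ∑ i, (p.1 i : ℝ) * w i) ^ σ * (a + ∑ i, (p.2 i : ℝ) * w i) ^ σ)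
        ≤ (B / c^(2*σ)) * (1 + ∑ i, (p.1 i : ℝ)) ^ ((1:ℝ) - 2*σ) := by
    rintro ⟨m, n⟩ hp
    rw [Finset.mem_filter] at hp
    obtain ⟨-, heq⟩ := hp
    simp only at heq ⊢
    have hadm : 0 < a + ∑ i, (m i : ℝ) * w i := by linarith [hdot0 m]
    have hkn : (∑ i, (n i : ℝ)) ≤ (V/W) * ∑ i, (m i : ℝ) := by
      rw [div_mul_eq_mul_div, le_div_iff₀ hW]
      calc (∑ i, (n i : ℝ)) * W = W * ∑ i, (n i : ℝ) := mul_comm _ _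
        _ ≤ ∑ i, (n i : ℝ) * w i := hdotW n
        _ = ∑ i, (m i : ℝ) * w i := heq.symm
        _ ≤ V * ∑ i, (m i : ℝ) := hdotV m
    have hM : ((Finset.univ.sup (fun k => max (m k) (n k)) : ℕ) : ℝ)
        ≤ (∑ i, (m i : ℝ)) + ∑ i, (n i : ℝ) := by
      have h1 : (Finset.univ.sup (fun k => max (m k) (n k)) : ℕ) ≤ (∑ i, m i) + (∑ i, n i) := by
        apply Finset.sup_le
        intro j _
        apply max_le
        · exact le_trans (Finset.single_le_sum (f := fun i => m i)
            (fun i _ => Nat.zero_le _) (Finset.mem_univ j)) (Nat.le_add_right _ _)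
        · exact le_trans (Finset.single_le_sum (f := fun i => n i)
            (fun i _ => Nat.zero_le _) (Finset.mem_univ j)) (Nat.le_add_left _ _)
      calc ((Finset.univ.sup (fun k => max (m k) (n k)) : ℕ) : ℝ)
          ≤ (((∑ i, m i) + (∑ i, n i) : ℕ) : ℝ) := Nat.cast_le.mpr h1
        _ = (∑ i, (m i : ℝ)) + ∑ i, (n i : ℝ) := by push_cast; rfl
    have hnum : ((Finset.univ.sup (fun k => max (m k) (n k)) : ℕ) : ℝ)
        ≤ B * (1 + ∑ i, (m i : ℝ)) := by
      have hBe : B * (1 + ∑ i, (m i : ℝ))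
          = 1 + V/W + (∑ i, (m i : ℝ)) + (V/W) * ∑ i, (m i : ℝ) := by rw [hBdef]; ring
      rw [hBe]
      linarith [hM, hkn, hk0 m]
    have hden_eq : (a + ∑ i, (m i : ℝ) * w i) ^ σ * (a + ∑ i, (n i : ℝ) * w i) ^ σ
        = (a + ∑ i, (m i : ℝ) * w i) ^ (2*σ) := by
      rw [← heq, ← Real.rpow_add hadm]
      congr 1
      ring
    have hbase : c * (1 + ∑ i, (m i : ℝ)) ≤ a + ∑ i, (m i : ℝ) * w i := by
      have h1 : c ≤ a := min_le_left _ _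
      have h2 : c * (∑ i, (m i : ℝ)) ≤ W * ∑ i, (m i : ℝ) :=
        mul_le_mul_of_nonneg_right (min_le_right _ _) (hk0 m)
      have h3 := hdotW m
      nlinarith
    have hden_low : c ^ (2*σ) * (1 + ∑ i, (m i : ℝ)) ^ (2*σ)
        ≤ (a + ∑ i, (m i : ℝ) * w i) ^ σ * (a + ∑ i, (n i : ℝ) * w i) ^ σ := by
      rw [hden_eq]
      calc c ^ (2*σ) * (1 + ∑ i, (m i : ℝ)) ^ (2*σ)
          = (c * (1 + ∑ i, (m i : ℝ))) ^ (2*σ) := (Real.mul_rpow hc.le (h1k m).le).symm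
        _ ≤ (a + ∑ i, (m i : ℝ) * w i) ^ (2*σ) :=
            Real.rpow_le_rpow (by positivity) hbase (by positivity)
    calc ((Finset.univ.sup (fun k => max (m k) (n k)) : ℕ) : ℝ) /
          ((a + ∑ i, (m i : ℝ) * w i) ^ σ * (a + ∑ i, (n i : ℝ) * w i) ^ σ)
        ≤ (B * (1 + ∑ i, (m i : ℝ))) / (c ^ (2*σ) * (1 + ∑ i, (m i : ℝ)) ^ (2*σ)) :=
          div_le_div₀ (by positivity) hnum (by positivity) hden_low
      _ = (B / c^(2*σ)) * (1 + ∑ i, (m i : ℝ)) ^ ((1:ℝ) - 2*σ) := by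
          rw [Real.rpow_sub (h1k m), Real.rpow_one, div_mul_div_comm]
  -- Step 2/3 : regroup and count fibers over the first coordinate
  have hg0 : ∀ m : Fin r → ℕ, (0:ℝ) ≤ (B / c^(2*σ)) * (1 + ∑ i, (m i : ℝ)) ^ ((1:ℝ) - 2*σ) := by
    intro m
    have := (h1k m).le
    positivity
  have step2 : (∑ p ∈ (box ×ˢ box).filter
      (fun p : (Fin r → ℕ) × (Fin r → ℕ) => ∑ i, (p.1 i : ℝ) * w i = ∑ i, (p.2 i : ℝ) * w i),
        ((Finset.univ.sup (fun k => max (p.1 k) (p.2 k)) : ℕ) : ℝ) /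
          ((a + ∑ i, (p.1 i : ℝ) * w i) ^ σ * (a + ∑ i, (p.2 i : ℝ) * w i) ^ σ))
      ≤ ∑ m ∈ box,
          (((box.filter (fun n => ∑ i, (m i : ℝ) * w i = ∑ i, (n i : ℝ) * w i)).card : ℝ) *
            ((B / c^(2*σ)) * (1 + ∑ i, (m i : ℝ)) ^ ((1:ℝ) - 2*σ))) := by
    calc (∑ p ∈ (box ×ˢ box).filter
        (fun p : (Fin r → ℕ) × (Fin r → ℕ) => ∑ i, (p.1 i : ℝ) * w i = ∑ i, (p.2 i : ℝ) * w i),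
          ((Finset.univ.sup (fun k => max (p.1 k) (p.2 k)) : ℕ) : ℝ) /
            ((a + ∑ i, (p.1 i : ℝ) * w i) ^ σ * (a + ∑ i, (p.2 i : ℝ) * w i) ^ σ))
        ≤ ∑ p ∈ (box ×ˢ box).filter
            (fun p : (Fin r → ℕ) × (Fin r → ℕ) => ∑ i, (p.1 i : ℝ) * w i = ∑ i, (p.2 i : ℝ) * w i),
            (B / c^(2*σ)) * (1 + ∑ i, (p.1 i : ℝ)) ^ ((1:ℝ) - 2*σ) :=
          Finset.sum_le_sum step1
      _ = ∑ p ∈ box ×ˢ box,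
            (if ∑ i, (p.1 i : ℝ) * w i = ∑ i, (p.2 i : ℝ) * w i then
              (B / c^(2*σ)) * (1 + ∑ i, (p.1 i : ℝ)) ^ ((1:ℝ) - 2*σ) else 0) :=
          Finset.sum_filter _ _
      _ = ∑ m ∈ box, ∑ n ∈ box,
            (if ∑ i, (m i : ℝ) * w i = ∑ i, (n i : ℝ) * w i then
              (B / c^(2*σ)) * (1 + ∑ i, (m i : ℝ)) ^ ((1:ℝ) - 2*σ) else 0) :=
          by rw [Finset.sum_product]
      _ = ∑ m ∈ box,
          (((box.filter (fun n => ∑ i, (m i : ℝ) * w i = ∑ i, (n i : ℝ) * w i)).card : ℝ) *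
            ((B / c^(2*σ)) * (1 + ∑ i, (m i : ℝ)) ^ ((1:ℝ) - 2*σ))) := by
          apply Finset.sum_congr rfl
          intro m _
          rw [← Finset.sum_filter, Finset.sum_const, nsmul_eq_mul]
  -- Step 3 : fiber count over n
  have step3 : ∀ m ∈ box,
      ((box.filter (fun n => ∑ i, (m i : ℝ) * w i = ∑ i, (n i : ℝ) * w i)).card : ℝ)
        ≤ (B * (1 + ∑ i, (m i : ℝ)))^(r-1) := by
    intro m _
    have hsW : (0:ℝ) ≤ (∑ i, (m i : ℝ) * w i) / W := div_nonneg (hdot0 m) hW.le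
    have hcard : (box.filter (fun n => ∑ i, (m i : ℝ) * w i = ∑ i, (n i : ℝ) * w i)).card
        ≤ (⌊(∑ i, (m i : ℝ) * w i) / W⌋₊ + 1)^(r-1) := by
      apply stmt14_count_aux hr
      · intro n hn j
        rw [Finset.mem_filter] at hn
        apply Nat.le_floor
        rw [le_div_iff₀ hW]
        calc (n j : ℝ) * W ≤ (n j : ℝ) * w j :=
              mul_le_mul_of_nonneg_left (hWle j) (Nat.cast_nonneg _)
          _ ≤ ∑ i, (n i : ℝ) * w i :=
              Finset.single_le_sum (f := fun i => (n i : ℝ) * w i)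
                (fun i _ => mul_nonneg (Nat.cast_nonneg _) (hw i).le) (Finset.mem_univ j)
          _ = ∑ i, (m i : ℝ) * w i := hn.2.symm
      · intro n hn n' hn' hagree
        rw [Finset.mem_filter] at hn hn'
        have hdd : ∑ i, (n i : ℝ) * w i = ∑ i, (n' i : ℝ) * w i := hn.2.symm.trans hn'.2
        have e1 : (∑ i ∈ Finset.univ.erase (⟨0, hr⟩ : Fin r), (n i : ℝ) * w i)
              + (n (⟨0, hr⟩ : Fin r) : ℝ) * w (⟨0, hr⟩ : Fin r) = ∑ i, (n i : ℝ) * w i :=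
          Finset.sum_erase_add _ _ (Finset.mem_univ _)
        have e2 : (∑ i ∈ Finset.univ.erase (⟨0, hr⟩ : Fin r), (n' i : ℝ) * w i)
              + (n' (⟨0, hr⟩ : Fin r) : ℝ) * w (⟨0, hr⟩ : Fin r) = ∑ i, (n' i : ℝ) * w i :=
          Finset.sum_erase_add _ _ (Finset.mem_univ _)
        have e3 : (∑ i ∈ Finset.univ.erase (⟨0, hr⟩ : Fin r), (n i : ℝ) * w i)
            = ∑ i ∈ Finset.univ.erase (⟨0, hr⟩ : Fin r), (n' i : ℝ) * w i :=
          Finset.sum_congr rfl fun i hi => by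
            rw [hagree i (Finset.ne_of_mem_erase hi)]
        have e4 : (n (⟨0, hr⟩ : Fin r) : ℝ) = (n' (⟨0, hr⟩ : Fin r) : ℝ) := by
          have := (hw (⟨0, hr⟩ : Fin r)).ne'
          have h5 : (n (⟨0, hr⟩ : Fin r) : ℝ) * w (⟨0, hr⟩ : Fin r)
              = (n' (⟨0, hr⟩ : Fin r) : ℝ) * w (⟨0, hr⟩ : Fin r) := by linarith
          exact mul_right_cancel₀ this h5
        have e5 : n (⟨0, hr⟩ : Fin r) = n' (⟨0, hr⟩ : Fin r) := Nat.cast_injective e4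
        funext i
        by_cases hi : i = (⟨0, hr⟩ : Fin r)
        · rw [hi]; exact e5
        · exact hagree i hi
    have hK1 : (⌊(∑ i, (m i : ℝ) * w i) / W⌋₊ : ℝ) + 1 ≤ B * (1 + ∑ i, (m i : ℝ)) := by
      have h1 : (⌊(∑ i, (m i : ℝ) * w i) / W⌋₊ : ℝ) ≤ (∑ i, (m i : ℝ) * w i) / W :=
        Nat.floor_le hsW
      have h2 : (∑ i, (m i : ℝ) * w i) / W ≤ (V * ∑ i, (m i : ℝ)) / W := by
        gcongr
        exact hdotV m
      have h3 : (V * ∑ i, (m i : ℝ)) / W = (V/W) * ∑ i, (m i : ℝ) := by ring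
      have h4 : B * (1 + ∑ i, (m i : ℝ))
          = 1 + V/W + (∑ i, (m i : ℝ)) + (V/W) * ∑ i, (m i : ℝ) := by rw [hBdef]; ring
      have h5 : (0:ℝ) ≤ (V/W) * ∑ i, (m i : ℝ) := mul_nonneg hVW (hk0 m)
      rw [h4]
      have h6 := h2.trans_eq h3
      linarith [hk0 m]
    calc ((box.filter (fun n => ∑ i, (m i : ℝ) * w i = ∑ i, (n i : ℝ) * w i)).card : ℝ)
        ≤ (((⌊(∑ i, (m i : ℝ) * w i) / W⌋₊ + 1)^(r-1) : ℕ) : ℝ) := Nat.cast_le.mpr hcard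
      _ = ((⌊(∑ i, (m i : ℝ) * w i) / W⌋₊ : ℝ) + 1)^(r-1) := by push_cast; rfl
      _ ≤ (B * (1 + ∑ i, (m i : ℝ)))^(r-1) := by
          apply pow_le_pow_left₀ (by positivity) hK1
  -- Step 4 : algebraic combination
  have step4 : ∀ m : Fin r → ℕ,
      (B * (1 + ∑ i, (m i : ℝ)))^(r-1) * ((B / c^(2*σ)) * (1 + ∑ i, (m i : ℝ)) ^ ((1:ℝ) - 2*σ))
        = (B / c^(2*σ)) * B^(r-1) * (1 + ((∑ i, m i : ℕ) : ℝ)) ^ ((r:ℝ) - 2*σ) := by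
    intro m
    have hcast : ((∑ i, m i : ℕ) : ℝ) = ∑ i, (m i : ℝ) := by push_cast; rfl
    have hrr : (((r-1 : ℕ)) : ℝ) = (r:ℝ) - 1 := by
      push_cast [Nat.cast_sub hr]; ring
    have hpow : (1 + ∑ i, (m i : ℝ))^(r-1)
        = (1 + ∑ i, (m i : ℝ)) ^ ((r:ℝ) - 1) := by
      rw [← Real.rpow_natCast (1 + ∑ i, (m i : ℝ)) (r-1), hrr]
    have hcomb : (1 + ∑ i, (m i : ℝ)) ^ ((r:ℝ) - 1) * (1 + ∑ i, (m i : ℝ)) ^ ((1:ℝ) - 2*σ)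
        = (1 + ∑ i, (m i : ℝ)) ^ ((r:ℝ) - 2*σ) := by
      rw [← Real.rpow_add (h1k m)]
      congr 1
      ring
    rw [hcast, mul_pow, hpow]
    calc B ^ (r-1) * (1 + ∑ i, (m i : ℝ)) ^ ((r:ℝ)-1) *
          ((B / c^(2*σ)) * (1 + ∑ i, (m i : ℝ)) ^ ((1:ℝ) - 2*σ))
        = (B / c^(2*σ)) * B^(r-1) *
          ((1 + ∑ i, (m i : ℝ)) ^ ((r:ℝ)-1) * (1 + ∑ i, (m i : ℝ)) ^ ((1:ℝ) - 2*σ)) := by ring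
      _ = (B / c^(2*σ)) * B^(r-1) * (1 + ∑ i, (m i : ℝ)) ^ ((r:ℝ) - 2*σ) := by rw [hcomb]
  -- Step 5 : group by the value of ∑ i, m i
  have hmaps : ∀ m ∈ box, (∑ i, m i) ∈ Finset.range (r*N+1) := by
    intro m hm
    rw [Finset.mem_range, Nat.lt_succ_iff]
    calc ∑ i, m i ≤ ∑ _i : Fin r, N :=
          Finset.sum_le_sum fun i _ => Finset.mem_Iic.mp ((Fintype.mem_piFinset.mp hm) i)
      _ = r * N := by
          rw [Finset.sum_const, Finset.card_univ, Fintype.card_fin, smul_eq_mul]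
  have hfib := Finset.sum_fiberwise_of_maps_to (g := fun m : Fin r → ℕ => ∑ i, m i)
    (f := fun m : Fin r → ℕ => (1 + ((∑ i, m i : ℕ) : ℝ)) ^ ((r:ℝ) - 2*σ)) hmaps
  have inner_bound : ∀ s ∈ Finset.range (r*N+1),
      (∑ m ∈ box.filter (fun m => ∑ i, m i = s), (1 + ((∑ i, m i : ℕ) : ℝ)) ^ ((r:ℝ) - 2*σ))
        ≤ (1+(s:ℝ)) ^ (2*(r:ℝ)-2*σ-1) := by
    intro s _
    have hcnt : (box.filter (fun m => ∑ i, m i = s)).card ≤ (s+1)^(r-1) := by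
      apply stmt14_count_aux hr
      · intro n hn j
        rw [Finset.mem_filter] at hn
        calc n j ≤ ∑ i, n i :=
              Finset.single_le_sum (f := fun i => n i) (fun i _ => Nat.zero_le _)
                (Finset.mem_univ j)
          _ = s := hn.2
      · intro n hn n' hn' hagree
        rw [Finset.mem_filter] at hn hn'
        have hdd : ∑ i, n i = ∑ i, n' i := hn.2.trans hn'.2.symm
        have e1 : (∑ i ∈ Finset.univ.erase (⟨0, hr⟩ : Fin r), n i) + n (⟨0, hr⟩ : Fin r)
            = ∑ i, n i := Finset.sum_erase_add _ _ (Finset.mem_univ _)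
        have e2 : (∑ i ∈ Finset.univ.erase (⟨0, hr⟩ : Fin r), n' i) + n' (⟨0, hr⟩ : Fin r)
            = ∑ i, n' i := Finset.sum_erase_add _ _ (Finset.mem_univ _)
        have e3 : (∑ i ∈ Finset.univ.erase (⟨0, hr⟩ : Fin r), n i)
            = ∑ i ∈ Finset.univ.erase (⟨0, hr⟩ : Fin r), n' i :=
          Finset.sum_congr rfl fun i hi => hagree i (Finset.ne_of_mem_erase hi)
        have e5 : n (⟨0, hr⟩ : Fin r) = n' (⟨0, hr⟩ : Fin r) := by omega
        funext i
        by_cases hi : i = (⟨0, hr⟩ : Fin r)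
        · rw [hi]; exact e5
        · exact hagree i hi
    have hrp : (0:ℝ) ≤ (1+(s:ℝ)) ^ ((r:ℝ) - 2*σ) :=
      Real.rpow_nonneg (by positivity) _
    calc (∑ m ∈ box.filter (fun m => ∑ i, m i = s), (1 + ((∑ i, m i : ℕ) : ℝ)) ^ ((r:ℝ) - 2*σ))
        = ∑ _m ∈ box.filter (fun m => ∑ i, m i = s), (1 + (s : ℝ)) ^ ((r:ℝ) - 2*σ) := by
          apply Finset.sum_congr rfl
          intro m hm
          rw [(Finset.mem_filter.mp hm).2]
      _ = ((box.filter (fun m => ∑ i, m i = s)).card : ℝ) * (1 + (s : ℝ)) ^ ((r:ℝ) - 2*σ) := by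
          rw [Finset.sum_const, nsmul_eq_mul]
      _ ≤ (((s+1)^(r-1) : ℕ) : ℝ) * (1 + (s : ℝ)) ^ ((r:ℝ) - 2*σ) :=
          mul_le_mul_of_nonneg_right (Nat.cast_le.mpr hcnt) hrp
      _ = (1+(s:ℝ)) ^ (2*(r:ℝ)-2*σ-1) := by
          have h1 : (((s+1)^(r-1) : ℕ) : ℝ) = (1+(s:ℝ))^((r:ℝ)-1) := by
            push_cast
            rw [add_comm (s:ℝ) 1, ← Real.rpow_natCast (1+(s:ℝ)) (r-1)]
            congr 1
            push_cast [Nat.cast_sub hr]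
            ring
          rw [h1, ← Real.rpow_add (by positivity)]
          congr 1
          ring
  -- put everything together
  have hC0 : (0:ℝ) ≤ (B / c^(2*σ)) * B^(r-1) := by positivity
  calc (∑ p ∈ (box ×ˢ box).filter
      (fun p : (Fin r → ℕ) × (Fin r → ℕ) => ∑ i, (p.1 i : ℝ) * w i = ∑ i, (p.2 i : ℝ) * w i),
        ((Finset.univ.sup (fun k => max (p.1 k) (p.2 k)) : ℕ) : ℝ) /
          ((a + ∑ i, (p.1 i : ℝ) * w i) ^ σ * (a + ∑ i, (p.2 i : ℝ) * w i) ^ σ))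
      ≤ ∑ m ∈ box,
          (((box.filter (fun n => ∑ i, (m i : ℝ) * w i = ∑ i, (n i : ℝ) * w i)).card : ℝ) *
            ((B / c^(2*σ)) * (1 + ∑ i, (m i : ℝ)) ^ ((1:ℝ) - 2*σ))) := step2
    _ ≤ ∑ m ∈ box, ((B * (1 + ∑ i, (m i : ℝ)))^(r-1) *
            ((B / c^(2*σ)) * (1 + ∑ i, (m i : ℝ)) ^ ((1:ℝ) - 2*σ))) :=
        Finset.sum_le_sum fun m hm =>
          mul_le_mul_of_nonneg_right (step3 m hm) (hg0 m)
    _ = ∑ m ∈ box, ((B / c^(2*σ)) * B^(r-1) * (1 + ((∑ i, m i : ℕ) : ℝ)) ^ ((r:ℝ) - 2*σ)) :=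
        Finset.sum_congr rfl fun m _ => step4 m
    _ = (B / c^(2*σ)) * B^(r-1) *
          ∑ m ∈ box, (1 + ((∑ i, m i : ℕ) : ℝ)) ^ ((r:ℝ) - 2*σ) := by
        rw [Finset.mul_sum]
    _ = (B / c^(2*σ)) * B^(r-1) *
          ∑ s ∈ Finset.range (r*N+1), ∑ m ∈ box.filter (fun m => ∑ i, m i = s),
            (1 + ((∑ i, m i : ℕ) : ℝ)) ^ ((r:ℝ) - 2*σ) := by
        rw [hfib]
    _ ≤ (B / c^(2*σ)) * B^(r-1) * ∑ s ∈ Finset.range (r*N+1), (1+(s:ℝ)) ^ (2*(r:ℝ)-2*σ-1) :=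
        mul_le_mul_of_nonneg_left (Finset.sum_le_sum inner_bound) hC0

end Stmt14Helpers

/-- Estimate of the diagonal sum weighted by the maximum coordinate `M`
(from the proof of Theorem 3). -/
theorem stmt14 (r : ℕ) (hr : 1 ≤ r) (a : ℝ) (ha : 0 < a) (w : Fin r → ℝ)
    (hw : ∀ i, 0 < w i) (σ : ℝ) (hσ₁ : (r : ℝ) - 1 ≤ σ) (hσ₂ : σ ≤ (r : ℝ)) :
    (σ < (r : ℝ) →
      (fun T : ℝ =>
        ∑ p ∈ ((Fintype.piFinset (fun _ : Fin r => Finset.Iic ⌊T⌋₊)) ×ˢ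
              (Fintype.piFinset (fun _ : Fin r => Finset.Iic ⌊T⌋₊))).filter
            (fun p => ∑ i, (p.1 i : ℝ) * w i = ∑ i, (p.2 i : ℝ) * w i),
          ((Finset.univ.sup (fun k => max (p.1 k) (p.2 k)) : ℕ) : ℝ) /
            ((a + ∑ i, (p.1 i : ℝ) * w i) ^ σ * (a + ∑ i, (p.2 i : ℝ) * w i) ^ σ))
        =O[atTop] fun T : ℝ => T ^ (2 * (r : ℝ) - 2 * σ)) ∧
    (σ = (r : ℝ) →
      (fun T : ℝ =>
        ∑ p ∈ ((Fintype.piFinset (fun _ : Fin r => Finset.Iic ⌊T⌋₊)) ×ˢ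
              (Fintype.piFinset (fun _ : Fin r => Finset.Iic ⌊T⌋₊))).filter
            (fun p => ∑ i, (p.1 i : ℝ) * w i = ∑ i, (p.2 i : ℝ) * w i),
          ((Finset.univ.sup (fun k => max (p.1 k) (p.2 k)) : ℕ) : ℝ) /
            ((a + ∑ i, (p.1 i : ℝ) * w i) ^ σ * (a + ∑ i, (p.2 i : ℝ) * w i) ^ σ))
        =O[atTop] fun T : ℝ => Real.log T) := by
  have hσ0 : (0:ℝ) ≤ σ := by
    have h1 : (1:ℝ) ≤ (r:ℝ) := by exact_mod_cast hr
    linarith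
  have main_bound := stmt14_main_bound hr a ha w hw σ hσ0
  have tele_rpow := fun (β : ℝ) (hβ : -1 < β) (n : ℕ) => stmt14_tele_rpow β hβ n
  have tele_log := stmt14_tele_log
  have hr1 : (1:ℝ) ≤ (r:ℝ) := by exact_mod_cast hr
  have hσ0 : (0:ℝ) ≤ σ := by linarith
  obtain ⟨C, hC, hbound⟩ := main_bound
  have hSnn : ∀ T : ℝ, 0 ≤
      ∑ p ∈ ((Fintype.piFinset (fun _ : Fin r => Finset.Iic ⌊T⌋₊)) ×ˢ
            (Fintype.piFinset (fun _ : Fin r => Finset.Iic ⌊T⌋₊))).filter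
          (fun p => ∑ i, (p.1 i : ℝ) * w i = ∑ i, (p.2 i : ℝ) * w i),
        ((Finset.univ.sup (fun k => max (p.1 k) (p.2 k)) : ℕ) : ℝ) /
          ((a + ∑ i, (p.1 i : ℝ) * w i) ^ σ * (a + ∑ i, (p.2 i : ℝ) * w i) ^ σ) := by
    intro T
    apply Finset.sum_nonneg
    intro p _
    apply div_nonneg (Nat.cast_nonneg _)
    have hd1 : (0:ℝ) ≤ ∑ i, (p.1 i : ℝ) * w i :=
      Finset.sum_nonneg fun i _ => mul_nonneg (Nat.cast_nonneg _) (hw i).le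
    have hd2 : (0:ℝ) ≤ ∑ i, (p.2 i : ℝ) * w i :=
      Finset.sum_nonneg fun i _ => mul_nonneg (Nat.cast_nonneg _) (hw i).le
    exact mul_nonneg (Real.rpow_nonneg (by linarith) _) (Real.rpow_nonneg (by linarith) _)
  have hsum_comm : ∀ n : ℕ, ∀ β : ℝ,
      (∑ s ∈ Finset.range n, (1+(s:ℝ)) ^ β) = ∑ s ∈ Finset.range n, ((s:ℝ)+1) ^ β := by
    intro n β
    exact Finset.sum_congr rfl fun s _ => by rw [add_comm]
  constructor
  · -- case σ < r
    intro hσ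
    have hβ : (-1:ℝ) < 2*(r:ℝ)-2*σ-1 := by linarith
    have hβ1 : (0:ℝ) < 2*(r:ℝ)-2*σ-1+1 := by linarith
    rw [Asymptotics.isBigO_iff]
    refine ⟨C * (2/((2*(r:ℝ)-2*σ-1)+1)) * ((r:ℝ)+2) ^ (2*(r:ℝ)-2*σ-1+1), ?_⟩
    filter_upwards [Filter.eventually_ge_atTop (1:ℝ)] with T hT
    have hT0 : (0:ℝ) < T := lt_of_lt_of_le one_pos hT
    have hNT : ((⌊T⌋₊ : ℕ) : ℝ) ≤ T := Nat.floor_le hT0.le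
    rw [Real.norm_of_nonneg (hSnn T),
      Real.norm_of_nonneg (Real.rpow_nonneg hT0.le _)]
    have hb1 : (((r*⌊T⌋₊+1 : ℕ)):ℝ) + 1 ≤ ((r:ℝ)+2) * T := by
      push_cast
      have h1 : (r:ℝ) * (⌊T⌋₊:ℝ) ≤ (r:ℝ) * T :=
        mul_le_mul_of_nonneg_left hNT (by positivity)
      nlinarith
    have htel := tele_rpow (2*(r:ℝ)-2*σ-1) hβ (r*⌊T⌋₊+1)
    have hrp : (((r*⌊T⌋₊+1 : ℕ)):ℝ) + 1 ≥ 0 := by positivity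
    calc (∑ p ∈ ((Fintype.piFinset (fun _ : Fin r => Finset.Iic ⌊T⌋₊)) ×ˢ
            (Fintype.piFinset (fun _ : Fin r => Finset.Iic ⌊T⌋₊))).filter
          (fun p => ∑ i, (p.1 i : ℝ) * w i = ∑ i, (p.2 i : ℝ) * w i),
        ((Finset.univ.sup (fun k => max (p.1 k) (p.2 k)) : ℕ) : ℝ) /
          ((a + ∑ i, (p.1 i : ℝ) * w i) ^ σ * (a + ∑ i, (p.2 i : ℝ) * w i) ^ σ))
        ≤ C * ∑ s ∈ Finset.range (r*⌊T⌋₊+1), (1+(s:ℝ)) ^ (2*(r:ℝ)-2*σ-1) := hbound ⌊T⌋₊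
      _ = C * ∑ s ∈ Finset.range (r*⌊T⌋₊+1), ((s:ℝ)+1) ^ (2*(r:ℝ)-2*σ-1) := by
          rw [hsum_comm]
      _ ≤ C * (2/((2*(r:ℝ)-2*σ-1)+1) *
            ((((r*⌊T⌋₊+1 : ℕ)):ℝ) + 1) ^ (2*(r:ℝ)-2*σ-1+1)) :=
          mul_le_mul_of_nonneg_left htel hC.le
      _ ≤ C * (2/((2*(r:ℝ)-2*σ-1)+1) *
            (((r:ℝ)+2) * T) ^ (2*(r:ℝ)-2*σ-1+1)) := by
          apply mul_le_mul_of_nonneg_left _ hC.le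
          apply mul_le_mul_of_nonneg_left _ (by positivity)
          exact Real.rpow_le_rpow hrp hb1 hβ1.le
      _ = C * (2/((2*(r:ℝ)-2*σ-1)+1)) * ((r:ℝ)+2) ^ (2*(r:ℝ)-2*σ-1+1) *
            T ^ (2*(r:ℝ)-2*σ-1+1) := by
          rw [Real.mul_rpow (by positivity) hT0.le]
          ring
      _ = C * (2/((2*(r:ℝ)-2*σ-1)+1)) * ((r:ℝ)+2) ^ (2*(r:ℝ)-2*σ-1+1) *
            T ^ (2*(r:ℝ) - 2*σ) := by
          norm_num
  · -- case σ = r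
    intro hσ
    subst hσ
    have hexp : 2*(r:ℝ)-2*(r:ℝ)-1 = -1 := by ring
    rw [Asymptotics.isBigO_iff]
    refine ⟨C * 4, ?_⟩
    filter_upwards [Filter.eventually_ge_atTop ((r:ℝ)+2)] with T hT
    have hT1 : (1:ℝ) ≤ T := by linarith
    have hT0 : (0:ℝ) < T := lt_of_lt_of_le one_pos hT1
    have hNT : ((⌊T⌋₊ : ℕ) : ℝ) ≤ T := Nat.floor_le hT0.le
    have hlogT : 0 ≤ Real.log T := Real.log_nonneg hT1
    rw [Real.norm_of_nonneg (hSnn T), Real.norm_of_nonneg hlogT]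
    have hb1 : (((r*⌊T⌋₊+1 : ℕ)):ℝ) + 1 ≤ ((r:ℝ)+2) * T := by
      push_cast
      have h1 : (r:ℝ) * (⌊T⌋₊:ℝ) ≤ (r:ℝ) * T :=
        mul_le_mul_of_nonneg_left hNT (by positivity)
      nlinarith
    have htel := tele_log (r*⌊T⌋₊+1)
    have hlog1 : Real.log ((((r*⌊T⌋₊+1 : ℕ)):ℝ) + 1) ≤ Real.log (((r:ℝ)+2) * T) :=
      Real.log_le_log (by positivity) hb1
    have hlog2 : Real.log (((r:ℝ)+2) * T) = Real.log ((r:ℝ)+2) + Real.log T :=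
      Real.log_mul (by positivity) hT0.ne'
    have hlog3 : Real.log ((r:ℝ)+2) ≤ Real.log T := Real.log_le_log (by positivity) hT
    calc (∑ p ∈ ((Fintype.piFinset (fun _ : Fin r => Finset.Iic ⌊T⌋₊)) ×ˢ
            (Fintype.piFinset (fun _ : Fin r => Finset.Iic ⌊T⌋₊))).filter
          (fun p => ∑ i, (p.1 i : ℝ) * w i = ∑ i, (p.2 i : ℝ) * w i),
        ((Finset.univ.sup (fun k => max (p.1 k) (p.2 k)) : ℕ) : ℝ) /
          ((a + ∑ i, (p.1 i : ℝ) * w i) ^ (r:ℝ) * (a + ∑ i, (p.2 i : ℝ) * w i) ^ (r:ℝ)))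
        ≤ C * ∑ s ∈ Finset.range (r*⌊T⌋₊+1), (1+(s:ℝ)) ^ (2*(r:ℝ)-2*(r:ℝ)-1) := hbound ⌊T⌋₊
      _ = C * ∑ s ∈ Finset.range (r*⌊T⌋₊+1), ((s:ℝ)+1)⁻¹ := by
          rw [hexp, hsum_comm]
          congr 1
          exact Finset.sum_congr rfl fun s _ => Real.rpow_neg_one _
      _ ≤ C * (2 * Real.log ((((r*⌊T⌋₊+1 : ℕ)):ℝ) + 1)) :=
          mul_le_mul_of_nonneg_left htel hC.le
      _ ≤ C * (2 * (Real.log ((r:ℝ)+2) + Real.log T)) := by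
          apply mul_le_mul_of_nonneg_left _ hC.le
          apply mul_le_mul_of_nonneg_left _ (by norm_num)
          rw [← hlog2]
          exact hlog1
      _ ≤ C * 4 * Real.log T := by nlinarith
end
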